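/- arXiv:1005.5501 — 6 statements merged into one kernel-verified Lean document; each statement's English description precedes it below -/
import Mathlib

section
/- Chain rule for Fox derivatives: if φ : Fₙ → Fₙ is an endomorphism of the free group Fₙ, then for any w ∈ Fₙ and each j, ∂(φ(w))/∂γⱼ = Σₖ φ(∂w/∂γₖ) · (∂(φ(γₖ))/∂γⱼ), where φ also denotes the induced ring map on ℤ[Fₙ]. -/
/-- Chain rule for Fox derivatives: for an endomorphism `φ` of the free group `Fₙ`,
`∂(φ(w))/∂γⱼ = Σₖ φ(∂w/∂γₖ) · ∂(φ(γₖ))/∂γⱼ`. -/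
theorem fox_deriv_chain_rule (n : ℕ)
    (d : Fin n → FreeGroup (Fin n) → MonoidAlgebra ℤ (FreeGroup (Fin n)))
    (hcross : ∀ (j : Fin n) (x y : FreeGroup (Fin n)),
      d j (x * y) = d j x + MonoidAlgebra.of ℤ (FreeGroup (Fin n)) x * d j y)
    (hbasis : ∀ j i : Fin n, d j (FreeGroup.of i) = if i = j then 1 else 0)
    (φ : FreeGroup (Fin n) →* FreeGroup (Fin n)) (w : FreeGroup (Fin n)) (j : Fin n) :
    d j (φ w) = ∑ k : Fin n,
      (MonoidAlgebra.mapDomainRingHom ℤ φ) (d k w) * d j (φ (FreeGroup.of k)) := by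
  set R := MonoidAlgebra.mapDomainRingHom ℤ φ with hR
  have hRof : ∀ x : FreeGroup (Fin n),
      R (MonoidAlgebra.of ℤ (FreeGroup (Fin n)) x)
        = MonoidAlgebra.of ℤ (FreeGroup (Fin n)) (φ x) := by
    intro x
    simp [hR, MonoidAlgebra.mapDomainRingHom, MonoidAlgebra.of_apply,
      Finsupp.mapDomain_single]
  have hone : ∀ k : Fin n, d k (1 : FreeGroup (Fin n)) = 0 := by
    intro k
    have h := hcross k 1 1
    rw [one_mul, map_one, one_mul, left_eq_add] at h
    exact h
  have hinv : ∀ (k : Fin n) (x : FreeGroup (Fin n)),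
      d k x⁻¹ = - (MonoidAlgebra.of ℤ (FreeGroup (Fin n)) x⁻¹ * d k x) := by
    intro k x
    have h := hcross k x⁻¹ x
    rw [inv_mul_cancel, hone k] at h
    exact eq_neg_of_add_eq_zero_left h.symm
  induction w using FreeGroup.induction_on with
  | C1 =>
    simp [hone]
  | of i =>
    rw [Finset.sum_eq_single i]
    · rw [hbasis i i]; simp
    · intro k _ hk
      rw [hbasis k i, if_neg (Ne.symm hk)]
      simp
    · simp
  | inv_of i ih =>
    rw [map_inv, hinv]
    rw [Finset.sum_eq_single i]
    · rw [hinv i, hbasis i i, if_pos rfl, mul_one, map_neg, hRof, map_inv φ, neg_mul]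
    · intro k _ hk
      rw [hinv k, hbasis k i, if_neg (Ne.symm hk), mul_zero, neg_zero, map_zero,
        zero_mul]
    · simp
  | mul x y ihx ihy =>
    rw [map_mul, hcross, ihx, ihy, Finset.mul_sum, ← Finset.sum_add_distrib]
    refine Finset.sum_congr rfl fun k _ => ?_
    rw [hcross, map_add, map_mul, hRof, add_mul, mul_assoc]
end

section
/- Let ρ : Fₙ → Γ be a group homomorphism. An element v ∈ Fₙ satisfies ρ(∂v/∂γⱼ) = 0 in ℤ[Γ] for all j = 1,…,n if and only if v lies in the commutator subgroup [Ker ρ, Ker ρ]. -/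
open MonoidAlgebra

namespace FoxVanishAux

open scoped Classical

variable {n : ℕ} {Γ : Type*} [Group Γ] (ρ : FreeGroup (Fin n) →* Γ)

/-- A section of `ρ` on its range, sending `1` to `1`. -/
noncomputable def sec (g : Γ) : FreeGroup (Fin n) :=
  if g = 1 then 1 else if h : ∃ x, ρ x = g then h.choose else 1

@[simp] lemma sec_one : sec ρ (1 : Γ) = 1 := if_pos rfl

lemma sec_spec {g : Γ} (h : ∃ x, ρ x = g) : ρ (sec ρ g) = g := by
  rcases eq_or_ne g 1 with rfl | hne
  · simp
  · rw [sec, if_neg hne, dif_pos h]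
    exact h.choose_spec

/-- The Schreier-type generator `t(g,i) = s(g) γᵢ s(g ρ(γᵢ))⁻¹`. -/
noncomputable def el (g : Γ) (i : Fin n) : FreeGroup (Fin n) :=
  sec ρ g * FreeGroup.of i * (sec ρ (g * ρ (FreeGroup.of i)))⁻¹

/-- General version: `s(g) v s(g ρ(v))⁻¹ ∈ ker ρ` for `g` in the range. -/
lemma mem_ker_aux {g : Γ} (hg : ∃ x, ρ x = g) (v : FreeGroup (Fin n)) :
    sec ρ g * v * (sec ρ (g * ρ v))⁻¹ ∈ ρ.ker := by
  obtain ⟨x, rfl⟩ := hg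
  have e1 : ρ (sec ρ (ρ x)) = ρ x := sec_spec ρ ⟨x, rfl⟩
  have e2 : ρ (sec ρ (ρ x * ρ v)) = ρ x * ρ v := sec_spec ρ ⟨x * v, by simp⟩
  simp only [MonoidHom.mem_ker, map_mul, map_inv, e1, e2]
  group

/-- The class of an element of the kernel in the abelianization (0 outside the kernel). -/
noncomputable def cl (w : FreeGroup (Fin n)) : Additive (Abelianization ρ.ker) :=
  if h : w ∈ ρ.ker then Additive.ofMul (Abelianization.of ⟨w, h⟩) else 0

lemma cl_mul {x y : FreeGroup (Fin n)} (hx : x ∈ ρ.ker) (hy : y ∈ ρ.ker) :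
    cl ρ (x * y) = cl ρ x + cl ρ y := by
  unfold cl
  rw [dif_pos (mul_mem hx hy), dif_pos hx, dif_pos hy]
  have : (⟨x * y, mul_mem hx hy⟩ : ρ.ker) = ⟨x, hx⟩ * ⟨y, hy⟩ := rfl
  rw [this, map_mul]
  rfl

lemma cl_inv {x : FreeGroup (Fin n)} (hx : x ∈ ρ.ker) :
    cl ρ x⁻¹ = - cl ρ x := by
  unfold cl
  rw [dif_pos (inv_mem hx), dif_pos hx]
  have : (⟨x⁻¹, inv_mem hx⟩ : ρ.ker) = (⟨x, hx⟩)⁻¹ := rfl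
  rw [this, map_inv]
  rfl

@[simp] lemma cl_one : cl ρ (1 : FreeGroup (Fin n)) = 0 := by
  unfold cl
  rw [dif_pos (one_mem _)]
  have : (⟨1, one_mem _⟩ : ρ.ker) = 1 := rfl
  rw [this, map_one]
  rfl

/-- `τ g i` : the class of `el g i` in the abelianization of the kernel. -/
noncomputable def tau (g : Γ) (i : Fin n) : Additive (Abelianization ρ.ker) :=
  cl ρ (el ρ g i)

/-- The `ℤ`-linear extension `ℤ[Γ] →+ (ker ρ)ᵃᵇ` of `g ↦ τ g j`. -/
noncomputable def T (j : Fin n) :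
    MonoidAlgebra ℤ Γ →+ Additive (Abelianization ρ.ker) :=
  (Finsupp.liftAddHom fun g => zmultiplesHom _ (tau ρ g j)).comp
    MonoidAlgebra.coeffAddEquiv.toAddMonoidHom

lemma T_single (j : Fin n) (g : Γ) (k : ℤ) :
    T ρ j (MonoidAlgebra.single g k) = k • tau ρ g j :=
  Finsupp.liftAddHom_apply_single _ _ _

section Fox

variable (d : Fin n → FreeGroup (Fin n) → MonoidAlgebra ℤ (FreeGroup (Fin n)))
  (hcross : ∀ (j : Fin n) (x y : FreeGroup (Fin n)),
      d j (x * y) = d j x + MonoidAlgebra.of ℤ (FreeGroup (Fin n)) x * d j y)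

include hcross

lemma d_one (j : Fin n) : d j 1 = 0 := by
  have h := hcross j 1 1
  rw [mul_one, map_one, one_mul] at h
  exact (left_eq_add.mp h)

lemma d_inv (j : Fin n) (x : FreeGroup (Fin n)) :
    d j x⁻¹ = -(MonoidAlgebra.of ℤ (FreeGroup (Fin n)) x⁻¹ * d j x) := by
  have h := hcross j x⁻¹ x
  rw [inv_mul_cancel, d_one d hcross] at h
  exact eq_neg_of_add_eq_zero_left h.symm

variable (hbasis : ∀ j i : Fin n, d j (FreeGroup.of i) = if i = j then 1 else 0)

include hbasis

/-- The fundamental identity of Fox calculus. -/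
lemma fund (v : FreeGroup (Fin n)) :
    ∑ j, d j v * (MonoidAlgebra.of ℤ (FreeGroup (Fin n)) (FreeGroup.of j) - 1)
      = MonoidAlgebra.of ℤ (FreeGroup (Fin n)) v - 1 := by
  induction v using FreeGroup.induction_on with
  | C1 => simp [d_one d hcross, ← MonoidAlgebra.one_def]
  | of i =>
      have : ∀ j, d j (FreeGroup.of i)
          * (MonoidAlgebra.of ℤ (FreeGroup (Fin n)) (FreeGroup.of j) - 1)
          = if i = j then MonoidAlgebra.of ℤ (FreeGroup (Fin n)) (FreeGroup.of j) - 1 else 0 := by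
        intro j
        rw [hbasis]
        split_ifs <;> simp
      rw [Finset.sum_congr rfl fun j _ => this j, Finset.sum_ite_eq]
      simp
  | inv_of i ih =>
      have hx : ∀ j, d j (FreeGroup.of i)⁻¹
          * (MonoidAlgebra.of ℤ (FreeGroup (Fin n)) (FreeGroup.of j) - 1)
          = -(MonoidAlgebra.of ℤ (FreeGroup (Fin n)) (FreeGroup.of i)⁻¹
              * (d j (FreeGroup.of i)
                * (MonoidAlgebra.of ℤ (FreeGroup (Fin n)) (FreeGroup.of j) - 1))) := by
        intro j
        rw [d_inv d hcross]
        noncomm_ring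
      rw [Finset.sum_congr rfl fun j _ => hx j, Finset.sum_neg_distrib,
        ← Finset.mul_sum, ih]
      rw [mul_sub, mul_one, ← map_mul, inv_mul_cancel, map_one]
      noncomm_ring
  | mul x y ihx ihy =>
      have hx : ∀ j, d j (x * y)
          * (MonoidAlgebra.of ℤ (FreeGroup (Fin n)) (FreeGroup.of j) - 1)
          = d j x * (MonoidAlgebra.of ℤ (FreeGroup (Fin n)) (FreeGroup.of j) - 1)
            + MonoidAlgebra.of ℤ (FreeGroup (Fin n)) x
              * (d j y * (MonoidAlgebra.of ℤ (FreeGroup (Fin n)) (FreeGroup.of j) - 1)) := by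
        intro j
        rw [hcross]
        noncomm_ring
      rw [Finset.sum_congr rfl fun j _ => hx j, Finset.sum_add_distrib, ihx,
        ← Finset.mul_sum, ihy]
      rw [map_mul]
      noncomm_ring

end Fox

section Mapped

variable (d : Fin n → FreeGroup (Fin n) → MonoidAlgebra ℤ (FreeGroup (Fin n)))
  (hcross : ∀ (j : Fin n) (x y : FreeGroup (Fin n)),
      d j (x * y) = d j x + MonoidAlgebra.of ℤ (FreeGroup (Fin n)) x * d j y)
  (hbasis : ∀ j i : Fin n, d j (FreeGroup.of i) = if i = j then 1 else 0)

lemma mapdr_of (x : FreeGroup (Fin n)) :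
    mapDomainRingHom ℤ ρ (MonoidAlgebra.of ℤ (FreeGroup (Fin n)) x)
      = MonoidAlgebra.single (ρ x) (1 : ℤ) := by
  simp [MonoidAlgebra.of_apply, MonoidAlgebra.mapDomainRingHom_apply,
    Finsupp.mapDomain_single]

include hcross

lemma Dcross (j : Fin n) (x y : FreeGroup (Fin n)) :
    mapDomainRingHom ℤ ρ (d j (x * y))
      = mapDomainRingHom ℤ ρ (d j x)
        + MonoidAlgebra.single (ρ x) (1 : ℤ) * mapDomainRingHom ℤ ρ (d j y) := by
  rw [hcross, map_add, map_mul, mapdr_of]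

lemma Dinv (j : Fin n) (x : FreeGroup (Fin n)) :
    mapDomainRingHom ℤ ρ (d j x⁻¹)
      = -(MonoidAlgebra.single ((ρ x)⁻¹) (1 : ℤ) * mapDomainRingHom ℤ ρ (d j x)) := by
  rw [d_inv d hcross, map_neg, map_mul, mapdr_of, map_inv]

include hbasis

lemma key (v : FreeGroup (Fin n)) :
    ∀ g : Γ, (∃ x, ρ x = g) →
      cl ρ (sec ρ g * v * (sec ρ (g * ρ v))⁻¹)
        = ∑ j, T ρ j (MonoidAlgebra.single g (1 : ℤ) * mapDomainRingHom ℤ ρ (d j v)) := by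
  induction v using FreeGroup.induction_on with
  | C1 =>
      intro g hg
      simp [d_one d hcross]
  | of i =>
      intro g hg
      have hterm : ∀ j, T ρ j (MonoidAlgebra.single g (1 : ℤ)
            * mapDomainRingHom ℤ ρ (d j (FreeGroup.of i)))
          = if i = j then tau ρ g j else 0 := by
        intro j
        rw [hbasis]
        split_ifs with h
        · rw [map_one, mul_one, T_single]
          exact one_smul _ _
        · simp
      rw [Finset.sum_congr rfl fun j _ => hterm j, Finset.sum_ite_eq]
      simp only [Finset.mem_univ, if_true]
      rfl
  | inv_of i ih =>
      intro g hg
      obtain ⟨a, ha⟩ := hg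
      set h' : Γ := g * (ρ (FreeGroup.of i))⁻¹ with hh'
      have hg' : ∃ x, ρ x = h' := ⟨a * (FreeGroup.of i)⁻¹, by simp [ha, hh']⟩
      have e : h' * ρ (FreeGroup.of i) = g := by rw [hh']; group
      have harg : g * ρ (FreeGroup.of i)⁻¹ = h' := by rw [hh', map_inv]
      have hfact : sec ρ g * (FreeGroup.of i)⁻¹ * (sec ρ (g * ρ (FreeGroup.of i)⁻¹))⁻¹
          = (el ρ h' i)⁻¹ := by
        rw [harg, el, e]
        group
      have hmem : el ρ h' i ∈ ρ.ker := mem_ker_aux ρ hg' (FreeGroup.of i)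
      rw [hfact, cl_inv ρ hmem]
      have hterm : ∀ j, T ρ j (MonoidAlgebra.single g (1 : ℤ)
            * mapDomainRingHom ℤ ρ (d j (FreeGroup.of i)⁻¹))
          = if i = j then -(tau ρ h' j) else 0 := by
        intro j
        rw [Dinv ρ d hcross, hbasis]
        split_ifs with h
        · rw [map_one, mul_one, mul_neg, map_neg, MonoidAlgebra.single_mul_single,
            mul_one, ← harg, ← map_inv, T_single]
          rw [harg]
          exact congrArg Neg.neg (one_smul _ _)
        · simp
      rw [Finset.sum_congr rfl fun j _ => hterm j, Finset.sum_ite_eq]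
      simp only [Finset.mem_univ, if_true]
      rfl
  | mul x y ihx ihy =>
      intro g hg
      obtain ⟨a, ha⟩ := hg
      have hgx : ∃ z, ρ z = g * ρ x := ⟨a * x, by rw [map_mul, ha]⟩
      have harg : g * ρ (x * y) = g * ρ x * ρ y := by rw [map_mul, mul_assoc]
      have hfact : sec ρ g * (x * y) * (sec ρ (g * ρ (x * y)))⁻¹
          = (sec ρ g * x * (sec ρ (g * ρ x))⁻¹)
            * (sec ρ (g * ρ x) * y * (sec ρ (g * ρ x * ρ y))⁻¹) := by
        rw [harg]
        group
      rw [hfact, cl_mul ρ (mem_ker_aux ρ ⟨a, ha⟩ x) (mem_ker_aux ρ hgx y),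
        ihx g ⟨a, ha⟩, ihy (g * ρ x) hgx, ← Finset.sum_add_distrib]
      refine Finset.sum_congr rfl fun j _ => ?_
      rw [Dcross ρ d hcross, mul_add, map_add]
      congr 2
      rw [← mul_assoc, MonoidAlgebra.single_mul_single, mul_one]

end Mapped

end FoxVanishAux

/-- For a homomorphism `ρ : Fₙ → Γ`, an element `v ∈ Fₙ` has all its Fox derivatives
killed by (the ring map induced by) `ρ` if and only if `v ∈ [Ker ρ, Ker ρ]`. -/
theorem fox_deriv_vanish_iff_mem_commutator_ker (n : ℕ)
    (d : Fin n → FreeGroup (Fin n) → MonoidAlgebra ℤ (FreeGroup (Fin n)))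
    (hcross : ∀ (j : Fin n) (x y : FreeGroup (Fin n)),
      d j (x * y) = d j x + MonoidAlgebra.of ℤ (FreeGroup (Fin n)) x * d j y)
    (hbasis : ∀ j i : Fin n, d j (FreeGroup.of i) = if i = j then 1 else 0)
    (Γ : Type*) [Group Γ] (ρ : FreeGroup (Fin n) →* Γ) (v : FreeGroup (Fin n)) :
    (∀ j : Fin n, (MonoidAlgebra.mapDomainRingHom ℤ ρ) (d j v) = 0) ↔
      v ∈ ⁅ρ.ker, ρ.ker⁆ := by
  open FoxVanishAux in
  constructor
  · intro hD
    -- First, `ρ v = 1`, by the fundamental identity of Fox calculus.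
    have h1 : MonoidAlgebra.mapDomainRingHom ℤ ρ
        (∑ j, d j v * (MonoidAlgebra.of ℤ (FreeGroup (Fin n)) (FreeGroup.of j) - 1)) = 0 := by
      rw [map_sum]
      exact Finset.sum_eq_zero fun j _ => by rw [map_mul, hD j, zero_mul]
    rw [fund d hcross hbasis v, map_sub, map_one, mapdr_of] at h1
    have hρv : ρ v = 1 := by
      have h2 := sub_eq_zero.mp h1
      rwa [MonoidAlgebra.one_def, MonoidAlgebra.single_left_inj one_ne_zero] at h2
    have hvK : v ∈ ρ.ker := hρv
    -- Now the key computation in the abelianization of the kernel.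
    have hk := key ρ d hcross hbasis v 1 ⟨1, map_one ρ⟩
    rw [hρv, mul_one, sec_one, one_mul, inv_one, mul_one] at hk
    have hRHS : ∑ j, T ρ j (MonoidAlgebra.single (1 : Γ) (1 : ℤ)
        * MonoidAlgebra.mapDomainRingHom ℤ ρ (d j v)) = 0 :=
      Finset.sum_eq_zero fun j _ => by rw [hD j, mul_zero, map_zero]
    rw [hRHS, cl, dif_pos hvK] at hk
    have hab : Abelianization.of (⟨v, hvK⟩ : ρ.ker) = 1 := hk
    have hcomm : (⟨v, hvK⟩ : ρ.ker) ∈ commutator ρ.ker :=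
      (QuotientGroup.eq_one_iff _).mp hab
    have : v ∈ Subgroup.map (ρ.ker).subtype (commutator ρ.ker) :=
      ⟨⟨v, hvK⟩, hcomm, rfl⟩
    rwa [commutator_def, Subgroup.map_commutator, ← MonoidHom.range_eq_map,
      Subgroup.subtype_range] at this
  · intro hv
    -- The set of elements with vanishing mapped Fox derivatives is a subgroup
    -- containing all commutators of kernel elements.
    let H : Subgroup (FreeGroup (Fin n)) :=
      { carrier := {w | ∀ j, MonoidAlgebra.mapDomainRingHom ℤ ρ (d j w) = 0}
        one_mem' := fun j => by rw [d_one d hcross, map_zero]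
        mul_mem' := fun hx hy j => by
          rw [Dcross ρ d hcross, hx j, hy j, mul_zero, add_zero]
        inv_mem' := fun hx j => by
          rw [Dinv ρ d hcross, hx j, mul_zero, neg_zero] }
    have hle : ⁅ρ.ker, ρ.ker⁆ ≤ H := by
      rw [Subgroup.commutator_le]
      intro a ha b hb
      intro j
      have ha' : ρ a = 1 := ha
      have hb' : ρ b = 1 := hb
      simp only [commutatorElement_def, Dcross ρ d hcross, Dinv ρ d hcross, map_mul,
        map_inv, ha', hb', one_mul, mul_one, inv_one, ← MonoidAlgebra.one_def]
      abel
    exact hle hv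
end

section
/- The Magnus representation of a free group is injective: the map w ↦ [[w, Σⱼ (∂w/∂γⱼ)sⱼ],[0,1]] from Fₙ into 2×2 upper-triangular matrices over the polynomial ring (ℤ[Fₙ])[s₁,…,sₙ] is an injective group homomorphism. -/
open MonoidAlgebra

/-- The polynomial ring `(ℤ[Fₙ])[s₁,…,sₙ]` in `n` commuting indeterminates over the
(noncommutative) group ring `ℤ[Fₙ]`, realized as the monoid algebra of `Fin n →₀ ℕ`. -/
abbrev MagnusPolyRing (n : ℕ) : Type :=
  AddMonoidAlgebra (MonoidAlgebra ℤ (FreeGroup (Fin n))) (Fin n →₀ ℕ)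

/-- The indeterminate `sⱼ`. -/
noncomputable def magnusS (n : ℕ) (j : Fin n) : MagnusPolyRing n :=
  AddMonoidAlgebra.of' (MonoidAlgebra ℤ (FreeGroup (Fin n))) (Fin n →₀ ℕ) (Finsupp.single j 1)

/-- The Magnus representation of the free group `Fₙ`: `w ↦ [[w, Σⱼ (∂w/∂γⱼ)sⱼ],[0,1]]`. -/
noncomputable def magnusMapFree (n : ℕ)
    (d : Fin n → FreeGroup (Fin n) → MonoidAlgebra ℤ (FreeGroup (Fin n)))
    (w : FreeGroup (Fin n)) : Matrix (Fin 2) (Fin 2) (MagnusPolyRing n) :=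
  !![AddMonoidAlgebra.singleZeroRingHom (MonoidAlgebra.of ℤ (FreeGroup (Fin n)) w),
      ∑ j : Fin n, AddMonoidAlgebra.singleZeroRingHom (d j w) * magnusS n j;
    0, 1]

lemma szrh_injective {n : ℕ} :
    Function.Injective (AddMonoidAlgebra.singleZeroRingHom :
      MonoidAlgebra ℤ (FreeGroup (Fin n)) →+* MagnusPolyRing n) := fun a b h => by
  simpa [AddMonoidAlgebra.coeff_single] using congrArg (fun f : MagnusPolyRing n => f.coeff 0) h

/-- The Magnus representation of a free group is an injective group homomorphism. -/
theorem magnus_rep_free_injective (n : ℕ)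
    (d : Fin n → FreeGroup (Fin n) → MonoidAlgebra ℤ (FreeGroup (Fin n)))
    (hcross : ∀ (j : Fin n) (x y : FreeGroup (Fin n)),
      d j (x * y) = d j x + MonoidAlgebra.of ℤ (FreeGroup (Fin n)) x * d j y)
    (hbasis : ∀ j i : Fin n, d j (FreeGroup.of i) = if i = j then 1 else 0) :
    (∀ x y : FreeGroup (Fin n),
      magnusMapFree n d (x * y) = magnusMapFree n d x * magnusMapFree n d y) ∧
    Function.Injective (magnusMapFree n d) := by
  constructor
  · intro x y
    unfold magnusMapFree
    refine Matrix.ext fun i k => ?_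
    fin_cases i <;> fin_cases k
    · simp only [Fin.mk_zero, Fin.mk_one, Matrix.mul_apply, Fin.sum_univ_two, Matrix.cons_val', Matrix.cons_val_zero,
        Matrix.empty_val', Matrix.cons_val_fin_one, Matrix.of_apply, Matrix.cons_val_one,
        Matrix.head_cons, Matrix.head_fin_const, mul_zero, add_zero, ← map_mul]
    · simp only [Fin.mk_zero, Fin.mk_one, Matrix.mul_apply, Fin.sum_univ_two, Matrix.cons_val', Matrix.cons_val_zero,
        Matrix.empty_val', Matrix.cons_val_fin_one, Matrix.of_apply, Matrix.cons_val_one,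
        Matrix.head_cons, Matrix.head_fin_const, mul_one]
      simp only [hcross, map_add, map_mul, add_mul, Finset.sum_add_distrib, Finset.mul_sum,
        mul_assoc]
      rw [add_comm]
    · simp [Fin.mk_zero, Fin.mk_one, Matrix.mul_apply, Fin.sum_univ_two]
    · simp [Fin.mk_zero, Fin.mk_one, Matrix.mul_apply, Fin.sum_univ_two]
  · intro x y h
    have h00 := congrArg (fun M : Matrix (Fin 2) (Fin 2) (MagnusPolyRing n) => M 0 0) h
    simp only [magnusMapFree, Matrix.of_apply, Matrix.cons_val', Matrix.cons_val_zero,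
      Matrix.empty_val', Matrix.cons_val_fin_one] at h00
    exact MonoidAlgebra.of_injective (szrh_injective h00)
end

section
/- For the homomorphism w ↦ ρ(Magnus matrix of w) obtained from the Magnus representation of Fₙ composed with a homomorphism ρ : Fₙ → Γ, the kernel equals [Ker ρ, Ker ρ]. In particular, taking ρ the abelianization map, the metabelian quotient Fₙ/[[Fₙ,Fₙ],[Fₙ,Fₙ]] embeds into GL(2, (ℤ[H₁(Fₙ)])[s₁,…,sₙ]). -/
/-- The polynomial ring `(ℤ[Γ])[s₁,…,sₙ]` in `n` commuting indeterminates. -/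
abbrev MagnusPolyRing' (n : ℕ) (Γ : Type*) [Group Γ] : Type _ :=
  AddMonoidAlgebra (MonoidAlgebra ℤ Γ) (Fin n →₀ ℕ)

/-- The Magnus representation of `Fₙ` reduced by `ρ : Fₙ → Γ`:
`w ↦ [[ρ(w), Σⱼ ρ(∂w/∂γⱼ)sⱼ],[0,1]]` over `(ℤ[Γ])[S]`. -/
noncomputable def magnusMapRho (n : ℕ) (Γ : Type*) [Group Γ]
    (ρ : FreeGroup (Fin n) →* Γ)
    (d : Fin n → FreeGroup (Fin n) → MonoidAlgebra ℤ (FreeGroup (Fin n)))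
    (w : FreeGroup (Fin n)) : Matrix (Fin 2) (Fin 2) (MagnusPolyRing' n Γ) :=
  !![AddMonoidAlgebra.singleZeroRingHom (MonoidAlgebra.of ℤ Γ (ρ w)),
      ∑ j : Fin n, AddMonoidAlgebra.singleZeroRingHom
        ((MonoidAlgebra.mapDomainRingHom ℤ ρ) (d j w)) *
        AddMonoidAlgebra.of' (MonoidAlgebra ℤ Γ) (Fin n →₀ ℕ) (Finsupp.single j 1);
    0, 1]

section Aux

variable {n : ℕ}

private lemma d_one' (d : Fin n → FreeGroup (Fin n) → MonoidAlgebra ℤ (FreeGroup (Fin n)))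
    (hcross : ∀ (j : Fin n) (x y : FreeGroup (Fin n)),
      d j (x * y) = d j x + MonoidAlgebra.of ℤ (FreeGroup (Fin n)) x * d j y)
    (j : Fin n) : d j 1 = 0 := by
  have h := hcross j 1 1
  rw [one_mul, map_one, one_mul, left_eq_add] at h
  exact h

private lemma d_inv' (d : Fin n → FreeGroup (Fin n) → MonoidAlgebra ℤ (FreeGroup (Fin n)))
    (hcross : ∀ (j : Fin n) (x y : FreeGroup (Fin n)),
      d j (x * y) = d j x + MonoidAlgebra.of ℤ (FreeGroup (Fin n)) x * d j y)
    (j : Fin n) (x : FreeGroup (Fin n)) :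
    d j x⁻¹ = -(MonoidAlgebra.of ℤ (FreeGroup (Fin n)) x⁻¹ * d j x) := by
  have h := hcross j x⁻¹ x
  rw [inv_mul_cancel, d_one' d hcross] at h
  linear_combination (norm := abel) -h

private lemma fund' (d : Fin n → FreeGroup (Fin n) → MonoidAlgebra ℤ (FreeGroup (Fin n)))
    (hcross : ∀ (j : Fin n) (x y : FreeGroup (Fin n)),
      d j (x * y) = d j x + MonoidAlgebra.of ℤ (FreeGroup (Fin n)) x * d j y)
    (hbasis : ∀ j i : Fin n, d j (FreeGroup.of i) = if i = j then 1 else 0)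
    (w : FreeGroup (Fin n)) :
    MonoidAlgebra.of ℤ (FreeGroup (Fin n)) w - 1
      = ∑ j : Fin n, d j w *
        (MonoidAlgebra.of ℤ (FreeGroup (Fin n)) (FreeGroup.of j) - 1) := by
  set C : FreeGroup (Fin n) → Prop := fun w =>
    MonoidAlgebra.of ℤ (FreeGroup (Fin n)) w - 1
      = ∑ j : Fin n, d j w *
        (MonoidAlgebra.of ℤ (FreeGroup (Fin n)) (FreeGroup.of j) - 1) with hC
  have hone : C 1 := by
    simp only [hC, map_one, sub_self, d_one' d hcross, zero_mul,
      Finset.sum_const_zero]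
  have hof : ∀ i, C (FreeGroup.of i) := by
    intro i
    simp only [hC, hbasis, ite_mul, one_mul, zero_mul, Finset.sum_ite_eq,
      Finset.mem_univ, if_true]
  have hmul : ∀ x y, C x → C y → C (x * y) := by
    intro x y ihx ihy
    simp only [hC] at ihx ihy ⊢
    calc MonoidAlgebra.of ℤ (FreeGroup (Fin n)) (x * y) - 1
        = (MonoidAlgebra.of ℤ (FreeGroup (Fin n)) x - 1)
          + MonoidAlgebra.of ℤ (FreeGroup (Fin n)) x *
            (MonoidAlgebra.of ℤ (FreeGroup (Fin n)) y - 1) := by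
          rw [map_mul]; noncomm_ring
      _ = ∑ j : Fin n, d j (x * y) *
            (MonoidAlgebra.of ℤ (FreeGroup (Fin n)) (FreeGroup.of j) - 1) := by
          rw [ihx, ihy, Finset.mul_sum, ← Finset.sum_add_distrib]
          refine Finset.sum_congr rfl fun j _ => ?_
          rw [hcross, add_mul, mul_assoc]
  have hinv : ∀ x, C x → C x⁻¹ := by
    intro x ih
    simp only [hC] at ih ⊢
    calc MonoidAlgebra.of ℤ (FreeGroup (Fin n)) x⁻¹ - 1
        = -(MonoidAlgebra.of ℤ (FreeGroup (Fin n)) x⁻¹ *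
            (MonoidAlgebra.of ℤ (FreeGroup (Fin n)) x - 1)) := by
          rw [mul_sub, ← map_mul, inv_mul_cancel, map_one, mul_one, neg_sub]
      _ = ∑ j : Fin n, d j x⁻¹ *
            (MonoidAlgebra.of ℤ (FreeGroup (Fin n)) (FreeGroup.of j) - 1) := by
          rw [ih, Finset.mul_sum, ← Finset.sum_neg_distrib]
          refine Finset.sum_congr rfl fun j _ => ?_
          rw [d_inv' d hcross, neg_mul, mul_assoc]
  exact FreeGroup.induction_on w hone hof (fun i _ => hinv _ (hof i)) hmul

end Aux

section Aux2

variable {n : ℕ} {Γ : Type*} [Group Γ]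

private lemma mat_eq_one_iff {R : Type*} [Semiring R] {a b : R} :
    !![a, b; (0:R), 1] = (1 : Matrix (Fin 2) (Fin 2) R) ↔ a = 1 ∧ b = 0 := by
  rw [← Matrix.ext_iff]
  constructor
  · intro h
    have h0 := h 0 0
    have h1 := h 0 1
    simp [Matrix.one_apply] at h0 h1
    exact ⟨h0, h1⟩
  · rintro ⟨rfl, rfl⟩ i j
    fin_cases i <;> fin_cases j <;> simp [Matrix.one_apply]

private lemma sum_single_eq_zero_iff (c : Fin n → MonoidAlgebra ℤ Γ) :
    (∑ j : Fin n, AddMonoidAlgebra.singleZeroRingHom (c j) *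
      AddMonoidAlgebra.of' (MonoidAlgebra ℤ Γ) (Fin n →₀ ℕ) (Finsupp.single j 1)) = 0
    ↔ ∀ j, c j = 0 := by
  have hterm : ∀ j, AddMonoidAlgebra.singleZeroRingHom (c j) *
      AddMonoidAlgebra.of' (MonoidAlgebra ℤ Γ) (Fin n →₀ ℕ) (Finsupp.single j 1)
      = AddMonoidAlgebra.single (Finsupp.single j 1) (c j) := by
    intro j
    have h0 : (AddMonoidAlgebra.singleZeroRingHom (c j) : MagnusPolyRing' n Γ)
        = AddMonoidAlgebra.single 0 (c j) := rfl
    rw [AddMonoidAlgebra.of'_apply, h0,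
      AddMonoidAlgebra.single_mul_single, zero_add, mul_one]
  simp only [hterm]
  constructor
  · intro h i
    have h' : (∑ j : Fin n, AddMonoidAlgebra.single (Finsupp.single j (1:ℕ)) (c j)
        : AddMonoidAlgebra (MonoidAlgebra ℤ Γ) (Fin n →₀ ℕ)) = 0 := h
    have := congrArg (fun f : AddMonoidAlgebra (MonoidAlgebra ℤ Γ) (Fin n →₀ ℕ) =>
      f.coeff (Finsupp.single i 1)) h'
    simpa [AddMonoidAlgebra.coeff_sum, AddMonoidAlgebra.coeff_single, Finsupp.finset_sum_apply, Finsupp.single_apply,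
      Finsupp.single_left_inj (one_ne_zero : (1:ℕ) ≠ 0)] using this
  · intro h
    simp [h]

private lemma magnus_eq_one_iff (ρ : FreeGroup (Fin n) →* Γ)
    (d : Fin n → FreeGroup (Fin n) → MonoidAlgebra ℤ (FreeGroup (Fin n)))
    (w : FreeGroup (Fin n)) :
    magnusMapRho n Γ ρ d w = 1 ↔
      ρ w = 1 ∧ ∀ j, MonoidAlgebra.mapDomainRingHom ℤ ρ (d j w) = 0 := by
  rw [magnusMapRho, mat_eq_one_iff, sum_single_eq_zero_iff]
  constructor
  · rintro ⟨h1, h2⟩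
    refine ⟨?_, h2⟩
    have := (AddMonoidAlgebra.singleZeroRingHom (R := MonoidAlgebra ℤ Γ)
        (M := Fin n →₀ ℕ)).map_one ▸ h1
    have h3 : MonoidAlgebra.of ℤ Γ (ρ w) = 1 := by
      apply AddMonoidAlgebra.single_right_injective (m := (0 : Fin n →₀ ℕ))
      exact h1
    have := MonoidAlgebra.of_injective (R := ℤ) (M := Γ)
      (by rw [h3, map_one] : MonoidAlgebra.of ℤ Γ (ρ w) = MonoidAlgebra.of ℤ Γ 1)
    exact this
  · rintro ⟨h1, h2⟩
    exact ⟨by rw [h1, map_one, map_one], h2⟩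

end Aux2

section Aux3

variable {n : ℕ} {Γ : Type*} [Group Γ]

private lemma magnus_map_one (ρ : FreeGroup (Fin n) →* Γ)
    (d : Fin n → FreeGroup (Fin n) → MonoidAlgebra ℤ (FreeGroup (Fin n)))
    (hcross : ∀ (j : Fin n) (x y : FreeGroup (Fin n)),
      d j (x * y) = d j x + MonoidAlgebra.of ℤ (FreeGroup (Fin n)) x * d j y) :
    magnusMapRho n Γ ρ d 1 = 1 := by
  rw [magnus_eq_one_iff]
  refine ⟨map_one ρ, fun j => ?_⟩
  rw [d_one' d hcross, map_zero]

private lemma magnus_map_mul (ρ : FreeGroup (Fin n) →* Γ)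
    (d : Fin n → FreeGroup (Fin n) → MonoidAlgebra ℤ (FreeGroup (Fin n)))
    (hcross : ∀ (j : Fin n) (x y : FreeGroup (Fin n)),
      d j (x * y) = d j x + MonoidAlgebra.of ℤ (FreeGroup (Fin n)) x * d j y)
    (x y : FreeGroup (Fin n)) :
    magnusMapRho n Γ ρ d (x * y) = magnusMapRho n Γ ρ d x * magnusMapRho n Γ ρ d y := by
  rw [magnusMapRho, magnusMapRho, magnusMapRho, Matrix.mul_fin_two]
  have hπ : ∀ z : FreeGroup (Fin n),
      MonoidAlgebra.mapDomainRingHom ℤ ρ (MonoidAlgebra.of ℤ (FreeGroup (Fin n)) z)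
        = MonoidAlgebra.of ℤ Γ (ρ z) := by
    intro z
    rw [MonoidAlgebra.of_apply, MonoidAlgebra.of_apply]
    exact MonoidAlgebra.mapDomain_single
  rw [← Matrix.ext_iff]
  simp only [Fin.forall_fin_two, Matrix.of_apply, Matrix.cons_val', Matrix.cons_val_zero,
    Matrix.cons_val_one, Matrix.head_cons, Matrix.empty_val',
    Matrix.cons_val_fin_one, Matrix.head_fin_const]
  refine ⟨⟨?_, ?_⟩, ?_, ?_⟩
  · simp only [map_mul, mul_zero, add_zero]
  · rw [mul_one, Finset.mul_sum, ← Finset.sum_add_distrib]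
    refine Finset.sum_congr rfl fun j _ => ?_
    rw [hcross, map_add, map_add, map_mul, hπ, map_mul, ← mul_assoc, add_mul,
      add_comm]
  · simp
  · simp

/-- the Magnus map as a monoid hom -/
private noncomputable def magnusHom (ρ : FreeGroup (Fin n) →* Γ)
    (d : Fin n → FreeGroup (Fin n) → MonoidAlgebra ℤ (FreeGroup (Fin n)))
    (hcross : ∀ (j : Fin n) (x y : FreeGroup (Fin n)),
      d j (x * y) = d j x + MonoidAlgebra.of ℤ (FreeGroup (Fin n)) x * d j y) :
    FreeGroup (Fin n) →* Matrix (Fin 2) (Fin 2) (MagnusPolyRing' n Γ) where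
  toFun := magnusMapRho n Γ ρ d
  map_one' := magnus_map_one ρ d hcross
  map_mul' := magnus_map_mul ρ d hcross

end Aux3

section Aux4

variable {n : ℕ} {Γ : Type*} [Group Γ]

private lemma magnus_hard (ρ : FreeGroup (Fin n) →* Γ)
    (d : Fin n → FreeGroup (Fin n) → MonoidAlgebra ℤ (FreeGroup (Fin n)))
    (hcross : ∀ (j : Fin n) (x y : FreeGroup (Fin n)),
      d j (x * y) = d j x + MonoidAlgebra.of ℤ (FreeGroup (Fin n)) x * d j y)
    (hbasis : ∀ j i : Fin n, d j (FreeGroup.of i) = if i = j then 1 else 0)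
    (w : FreeGroup (Fin n)) (h1 : w ∈ ρ.ker)
    (h2 : ∀ j, MonoidAlgebra.mapDomainRingHom ℤ ρ (d j w) = 0) :
    w ∈ ⁅ρ.ker, ρ.ker⁆ := by
  classical
  set N := ρ.ker with hN
  -- a transversal section
  set s : Γ → FreeGroup (Fin n) := fun g =>
    if g = 1 then 1 else if h : ∃ x, ρ x = g then h.choose else 1 with hsdef
  have hs1 : s 1 = 1 := by simp [hsdef]
  have hs : ∀ x : FreeGroup (Fin n), ρ (s (ρ x)) = ρ x := by
    intro x
    by_cases hx : ρ x = 1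
    · rw [hx, hs1, map_one]
    · have hex : ∃ y, ρ y = ρ x := ⟨x, rfl⟩
      simp only [hsdef, if_neg hx, dif_pos hex]
      exact hex.choose_spec
  have hvmem : ∀ x : FreeGroup (Fin n), x * (s (ρ x))⁻¹ ∈ N := by
    intro x
    rw [hN, MonoidHom.mem_ker, map_mul, map_inv, hs, mul_inv_cancel]
  -- the retraction to the abelianized kernel
  set f : FreeGroup (Fin n) → Additive (Abelianization ↥N) := fun x =>
    Additive.ofMul (Abelianization.of ⟨x * (s (ρ x))⁻¹, hvmem x⟩) with hfdef
  set θ : MonoidAlgebra ℤ (FreeGroup (Fin n)) →+ Additive (Abelianization ↥N) :=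
    (Finsupp.liftAddHom (fun x => (zmultiplesHom _) (f x))).comp
      MonoidAlgebra.coeffAddEquiv.toAddMonoidHom with hθdef
  have hθsingle : ∀ (x : FreeGroup (Fin n)) (m : ℤ),
      θ (MonoidAlgebra.single x m) = m • f x := by
    intro x m
    exact Finsupp.liftAddHom_apply_single (fun x => (zmultiplesHom _) (f x)) x m
  -- key group-theoretic identities
  have hfs : ∀ y : FreeGroup (Fin n), f (s (ρ y)) = 0 := by
    intro y
    have hss : s (ρ (s (ρ y))) = s (ρ y) := by rw [hs]
    have he : (⟨s (ρ y) * (s (ρ (s (ρ y))))⁻¹, hvmem (s (ρ y))⟩ : ↥N) = 1 := by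
      apply Subtype.ext
      simp only [hss, mul_inv_cancel, OneMemClass.coe_one]
    show Additive.ofMul (Abelianization.of
      (⟨s (ρ y) * (s (ρ (s (ρ y))))⁻¹, hvmem (s (ρ y))⟩ : ↥N)) = 0
    rw [he, map_one]
    rfl
  have hfmul : ∀ y x : FreeGroup (Fin n), f (y * x) = f y + f (s (ρ y) * x) := by
    intro y x
    have ht : s (ρ (s (ρ y) * x)) = s (ρ (y * x)) := by rw [map_mul, map_mul, hs]
    show Additive.ofMul (Abelianization.of (⟨y * x * (s (ρ (y * x)))⁻¹, hvmem _⟩ : ↥N))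
      = Additive.ofMul (Abelianization.of (⟨y * (s (ρ y))⁻¹, hvmem _⟩ : ↥N))
        + Additive.ofMul (Abelianization.of
            (⟨s (ρ y) * x * (s (ρ (s (ρ y) * x)))⁻¹, hvmem _⟩ : ↥N))
    rw [← ofMul_mul, ← map_mul Abelianization.of]
    congr 1
    apply congrArg
    apply Subtype.ext
    show y * x * (s (ρ (y * x)))⁻¹
      = (y * (s (ρ y))⁻¹) * (s (ρ y) * x * (s (ρ (s (ρ y) * x)))⁻¹)
    rw [ht]
    group
  -- θ kills (ker π) * (augmentation ideal)
  set π := MonoidAlgebra.mapDomainRingHom ℤ ρ with hπdef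
  set σ : MonoidAlgebra ℤ Γ →+ MonoidAlgebra ℤ (FreeGroup (Fin n)) :=
    { toFun := MonoidAlgebra.mapDomain s, map_zero' := MonoidAlgebra.mapDomain_zero s,
      map_add' := MonoidAlgebra.mapDomain_add s } with hσdef
  have hστ : ∀ (y : FreeGroup (Fin n)) (m : ℤ),
      σ (π (MonoidAlgebra.single y m)) = MonoidAlgebra.single (s (ρ y)) m := by
    intro y m
    rw [hπdef, hσdef]
    show MonoidAlgebra.mapDomain s (MonoidAlgebra.mapDomain ρ (MonoidAlgebra.single y m)) = _
    rw [MonoidAlgebra.mapDomain_single, MonoidAlgebra.mapDomain_single]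
  have hstep : ∀ (a : MonoidAlgebra ℤ (FreeGroup (Fin n))) (x : FreeGroup (Fin n)),
      θ ((a - σ (π a)) * (MonoidAlgebra.of ℤ (FreeGroup (Fin n)) x - 1)) = 0 := by
    intro a x
    have key : ∀ (y : FreeGroup (Fin n)) (m : ℤ),
        θ ((MonoidAlgebra.single y m
          - σ (π (MonoidAlgebra.single y m)))
          * (MonoidAlgebra.of ℤ (FreeGroup (Fin n)) x - 1)) = 0 := by
      intro y m
      rw [hστ]
      have hexp : (MonoidAlgebra.single y m
          - MonoidAlgebra.single (s (ρ y)) m) *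
          (MonoidAlgebra.of ℤ (FreeGroup (Fin n)) x - 1)
          = (MonoidAlgebra.single (y * x) m - MonoidAlgebra.single y m)
            - (MonoidAlgebra.single (s (ρ y) * x) m
              - MonoidAlgebra.single (s (ρ y)) m) := by
        have h1' : MonoidAlgebra.single y m *
            MonoidAlgebra.of ℤ (FreeGroup (Fin n)) x = MonoidAlgebra.single (y * x) m := by
          rw [MonoidAlgebra.of_apply]
          show MonoidAlgebra.single y m * MonoidAlgebra.single x 1 = _
          rw [MonoidAlgebra.single_mul_single, mul_one]
        have h2' : MonoidAlgebra.single y m * 1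
            = MonoidAlgebra.single y m := mul_one _
        have h3' : MonoidAlgebra.single (s (ρ y)) m *
            MonoidAlgebra.of ℤ (FreeGroup (Fin n)) x
            = MonoidAlgebra.single (s (ρ y) * x) m := by
          rw [MonoidAlgebra.of_apply]
          show MonoidAlgebra.single _ m * MonoidAlgebra.single x 1 = _
          rw [MonoidAlgebra.single_mul_single, mul_one]
        rw [sub_mul, mul_sub, mul_sub, h1', h2', h3', mul_one]
      rw [hexp]
      rw [map_sub, map_sub, map_sub, hθsingle, hθsingle, hθsingle, hθsingle,
        hfmul, hfs]
      simp only [smul_add, smul_zero, sub_zero]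
      abel
    let T : MonoidAlgebra ℤ (FreeGroup (Fin n)) →+ Additive (Abelianization ↥N) :=
      θ.comp ((AddMonoidHom.mulRight
          (MonoidAlgebra.of ℤ (FreeGroup (Fin n)) x - 1)).comp
        (AddMonoidHom.id (MonoidAlgebra ℤ (FreeGroup (Fin n)))
          - σ.comp π.toAddMonoidHom))
    have hT : ∀ a : MonoidAlgebra ℤ (FreeGroup (Fin n)),
        T a = θ ((a - σ (π a)) * (MonoidAlgebra.of ℤ (FreeGroup (Fin n)) x - 1)) :=
      fun a => rfl
    have hT0 : T = 0 := by
      refine MonoidAlgebra.addMonoidHom_ext fun y m => ?_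
      show θ ((MonoidAlgebra.single y m - σ (π (MonoidAlgebra.single y m)))
        * (MonoidAlgebra.of ℤ (FreeGroup (Fin n)) x - 1)) = 0
      exact key y m
    rw [← hT a, hT0]
    rfl
  have hker : ∀ (a : MonoidAlgebra ℤ (FreeGroup (Fin n))), π a = 0 →
      ∀ x : FreeGroup (Fin n),
      θ (a * (MonoidAlgebra.of ℤ (FreeGroup (Fin n)) x - 1)) = 0 := by
    intro a ha x
    have := hstep a x
    rwa [ha, map_zero, sub_zero] at this
  -- evaluate θ on `w - 1`
  have hθw : θ (MonoidAlgebra.of ℤ (FreeGroup (Fin n)) w - 1)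
      = Additive.ofMul (Abelianization.of (⟨w, h1⟩ : ↥N)) := by
    have hw1 : ρ w = 1 := h1
    have e1 : θ (MonoidAlgebra.of ℤ (FreeGroup (Fin n)) w)
        = Additive.ofMul (Abelianization.of (⟨w, h1⟩ : ↥N)) := by
      rw [MonoidAlgebra.of_apply]
      show θ (MonoidAlgebra.single w 1) = _
      rw [hθsingle, one_smul]
      have : (⟨w * (s (ρ w))⁻¹, hvmem w⟩ : ↥N) = ⟨w, h1⟩ := by
        apply Subtype.ext
        simp only [hw1, hs1, inv_one, mul_one]
      show Additive.ofMul (Abelianization.of (⟨w * (s (ρ w))⁻¹, hvmem w⟩ : ↥N)) = _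
      rw [this]
    have e2 : θ (1 : MonoidAlgebra ℤ (FreeGroup (Fin n))) = 0 := by
      show θ (MonoidAlgebra.single 1 1) = 0
      rw [hθsingle, one_smul]
      have : (⟨(1 : FreeGroup (Fin n)) * (s (ρ 1))⁻¹, hvmem 1⟩ : ↥N) = 1 := by
        apply Subtype.ext
        simp only [map_one, hs1, inv_one, mul_one, OneMemClass.coe_one]
      show Additive.ofMul (Abelianization.of
        (⟨(1 : FreeGroup (Fin n)) * (s (ρ 1))⁻¹, hvmem 1⟩ : ↥N)) = 0
      rw [this, map_one]
      rfl
    rw [map_sub, e1, e2, sub_zero]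
  have hzero : θ (MonoidAlgebra.of ℤ (FreeGroup (Fin n)) w - 1) = 0 := by
    rw [fund' d hcross hbasis w, map_sum]
    exact Finset.sum_eq_zero fun j _ => hker (d j w) (h2 j) _
  rw [hθw, ofMul_eq_zero] at hzero
  have hmem : (⟨w, h1⟩ : ↥N) ∈ commutator ↥N := by
    have := (QuotientGroup.eq_one_iff (⟨w, h1⟩ : ↥N)).mp hzero
    exact this
  have : w ∈ Subgroup.map N.subtype (commutator ↥N) :=
    ⟨⟨w, h1⟩, hmem, rfl⟩
  rwa [commutator_def, Subgroup.map_commutator, ← MonoidHom.range_eq_map,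
    Subgroup.range_subtype] at this

end Aux4

section Aux5

variable {n : ℕ} {Γ : Type*} [Group Γ]

private lemma unitri_mul {R : Type*} [Semiring R] (b c : R) :
    !![(1:R), b; 0, 1] * !![(1:R), c; 0, 1] = !![(1:R), c + b; 0, 1] := by
  rw [Matrix.mul_fin_two]
  simp

private lemma magnus_ker_form (ρ : FreeGroup (Fin n) →* Γ)
    (d : Fin n → FreeGroup (Fin n) → MonoidAlgebra ℤ (FreeGroup (Fin n)))
    {v : FreeGroup (Fin n)} (hv : v ∈ ρ.ker) :
    ∃ b, magnusMapRho n Γ ρ d v = !![1, b; 0, 1] := by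
  refine ⟨∑ j : Fin n, AddMonoidAlgebra.singleZeroRingHom
      ((MonoidAlgebra.mapDomainRingHom ℤ ρ) (d j v)) *
      AddMonoidAlgebra.of' (MonoidAlgebra ℤ Γ) (Fin n →₀ ℕ) (Finsupp.single j 1), ?_⟩
  rw [magnusMapRho, show ρ v = 1 from hv, map_one, map_one]

private lemma magnus_easy (ρ : FreeGroup (Fin n) →* Γ)
    (d : Fin n → FreeGroup (Fin n) → MonoidAlgebra ℤ (FreeGroup (Fin n)))
    (hcross : ∀ (j : Fin n) (x y : FreeGroup (Fin n)),
      d j (x * y) = d j x + MonoidAlgebra.of ℤ (FreeGroup (Fin n)) x * d j y)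
    {w : FreeGroup (Fin n)} (hw : w ∈ ⁅ρ.ker, ρ.ker⁆) :
    magnusMapRho n Γ ρ d w = 1 := by
  let φ := magnusHom ρ d hcross
  let u := φ.toHomUnits
  suffices hsub : ⁅ρ.ker, ρ.ker⁆ ≤ u.ker by
    have h1 := hsub hw
    rw [MonoidHom.mem_ker] at h1
    have h2 := congrArg Units.val h1
    simpa [u, φ, MonoidHom.coe_toHomUnits, magnusHom] using h2
  rw [Subgroup.commutator_le]
  intro g₁ hg₁ g₂ hg₂
  rw [MonoidHom.mem_ker]
  have hc : Commute (u g₁) (u g₂) := by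
    obtain ⟨b, hb⟩ := magnus_ker_form ρ d hg₁
    obtain ⟨c, hc⟩ := magnus_ker_form ρ d hg₂
    have hφ : φ g₁ * φ g₂ = φ g₂ * φ g₁ := by
      show magnusMapRho n Γ ρ d g₁ * magnusMapRho n Γ ρ d g₂
        = magnusMapRho n Γ ρ d g₂ * magnusMapRho n Γ ρ d g₁
      rw [hb, hc, unitri_mul, unitri_mul, add_comm]
    exact Units.ext (by simpa [u, Units.val_mul, MonoidHom.coe_toHomUnits] using hφ)
  have h3 := commutatorElement_eq_one_iff_commute.mpr hc
  rw [← map_commutatorElement] at h3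
  exact h3

end Aux5

/-- The kernel of the reduced Magnus representation is `[Ker ρ, Ker ρ]`; in particular,
taking `ρ` the abelianization map, the metabelian quotient
`Fₙ/[[Fₙ,Fₙ],[Fₙ,Fₙ]]` embeds into `GL(2,(ℤ[H₁(Fₙ)])[S])`. -/
theorem magnus_rep_rho_kernel (n : ℕ)
    (d : Fin n → FreeGroup (Fin n) → MonoidAlgebra ℤ (FreeGroup (Fin n)))
    (hcross : ∀ (j : Fin n) (x y : FreeGroup (Fin n)),
      d j (x * y) = d j x + MonoidAlgebra.of ℤ (FreeGroup (Fin n)) x * d j y)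
    (hbasis : ∀ j i : Fin n, d j (FreeGroup.of i) = if i = j then 1 else 0) :
    (∀ (Γ : Type) [Group Γ] (ρ : FreeGroup (Fin n) →* Γ) (w : FreeGroup (Fin n)),
      magnusMapRho n Γ ρ d w = 1 ↔ w ∈ ⁅ρ.ker, ρ.ker⁆) ∧
    (∀ x y : FreeGroup (Fin n),
      magnusMapRho n (Abelianization (FreeGroup (Fin n))) Abelianization.of d x =
        magnusMapRho n (Abelianization (FreeGroup (Fin n))) Abelianization.of d y ↔
      x⁻¹ * y ∈ ⁅commutator (FreeGroup (Fin n)), commutator (FreeGroup (Fin n))⁆) := by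
  have main : ∀ (Γ : Type) [Group Γ] (ρ : FreeGroup (Fin n) →* Γ)
      (w : FreeGroup (Fin n)),
      magnusMapRho n Γ ρ d w = 1 ↔ w ∈ ⁅ρ.ker, ρ.ker⁆ := by
    intro Γ _ ρ w
    constructor
    · intro h
      rw [magnus_eq_one_iff] at h
      exact magnus_hard ρ d hcross hbasis w h.1 h.2
    · exact magnus_easy ρ d hcross
  refine ⟨fun Γ _ ρ w => main Γ ρ w, ?_⟩
  intro x y
  have habel : (Abelianization.of :
      FreeGroup (Fin n) →* Abelianization (FreeGroup (Fin n))).ker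
      = commutator (FreeGroup (Fin n)) := by
    ext z
    rw [MonoidHom.mem_ker]
    exact QuotientGroup.eq_one_iff z
  set φ := magnusHom (Γ := Abelianization (FreeGroup (Fin n)))
    Abelianization.of d hcross with hφdef
  have hφapp : ∀ z, φ z
      = magnusMapRho n (Abelianization (FreeGroup (Fin n))) Abelianization.of d z :=
    fun z => rfl
  constructor
  · intro h
    have hxy : φ.toHomUnits x = φ.toHomUnits y := by
      apply Units.ext
      rw [MonoidHom.coe_toHomUnits, MonoidHom.coe_toHomUnits, hφapp, hφapp]
      exact h
    have h1 : φ.toHomUnits (x⁻¹ * y) = 1 := by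
      rw [map_mul, map_inv, hxy, inv_mul_cancel]
    have h2 : magnusMapRho n (Abelianization (FreeGroup (Fin n)))
        Abelianization.of d (x⁻¹ * y) = 1 := by
      have := congrArg Units.val h1
      rw [MonoidHom.coe_toHomUnits] at this
      rw [← hφapp]
      exact this
    rw [main _ Abelianization.of (x⁻¹ * y), habel] at h2
    exact h2
  · intro h
    have h1 : magnusMapRho n (Abelianization (FreeGroup (Fin n)))
        Abelianization.of d (x⁻¹ * y) = 1 := by
      rw [main _ Abelianization.of (x⁻¹ * y), habel]
      exact h
    have h2 : φ x * φ (x⁻¹ * y) = φ y := by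
      rw [← map_mul, mul_inv_cancel_left]
    rw [hφapp, hφapp, hφapp, h1, mul_one] at h2
    rw [h2]
end

section
/- The augmentation ideal I(Fₙ) of the group ring ℤ[Fₙ] of a free group of rank n is a free right ℤ[Fₙ]-module with basis {γ₁⁻¹ − 1, γ₂⁻¹ − 1, …, γₙ⁻¹ − 1}. -/
namespace AugFree

variable (n : ℕ)

abbrev R (n : ℕ) := MonoidAlgebra ℤ (FreeGroup (Fin n))

structure Coc (n : ℕ) where
  d : Fin n → R n
  g : FreeGroup (Fin n)

theorem Coc.ext' {x y : Coc n} (hd : x.d = y.d) (hg : x.g = y.g) : x = y := by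
  cases x; cases y; simp_all

noncomputable instance : Group (Coc n) where
  mul x y := ⟨fun i => x.d i * MonoidAlgebra.of ℤ _ y.g + y.d i, x.g * y.g⟩
  one := ⟨0, 1⟩
  inv x := ⟨fun i => -(x.d i) * MonoidAlgebra.of ℤ _ x.g⁻¹, x.g⁻¹⟩
  mul_assoc x y z := by
    refine Coc.ext' n ?_ (mul_assoc _ _ _)
    funext i
    show (x.d i * _ + y.d i) * _ + z.d i =
      x.d i * MonoidAlgebra.of ℤ _ (y.g * z.g) + (y.d i * _ + z.d i)
    rw [map_mul]; noncomm_ring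
  one_mul x := by
    refine Coc.ext' n ?_ (one_mul _)
    funext i
    show (0 : R n) * _ + x.d i = x.d i
    rw [zero_mul, zero_add]
  mul_one x := by
    refine Coc.ext' n ?_ (mul_one _)
    funext i
    show x.d i * MonoidAlgebra.of ℤ _ (1 : FreeGroup (Fin n)) + 0 = x.d i
    rw [map_one, mul_one, add_zero]
  inv_mul_cancel x := by
    refine Coc.ext' n ?_ (inv_mul_cancel _)
    funext i
    show -(x.d i) * _ * _ + x.d i = (0 : R n)
    rw [mul_assoc, ← map_mul, inv_mul_cancel, map_one, mul_one, neg_add_cancel]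

@[simp] theorem Coc.mul_d (x y : Coc n) (i : Fin n) :
    (x * y).d i = x.d i * MonoidAlgebra.of ℤ _ y.g + y.d i := rfl
@[simp] theorem Coc.mul_g (x y : Coc n) : (x * y).g = x.g * y.g := rfl
@[simp] theorem Coc.one_d (i : Fin n) : (1 : Coc n).d i = 0 := rfl
@[simp] theorem Coc.one_g : (1 : Coc n).g = 1 := rfl
@[simp] theorem Coc.inv_d (x : Coc n) (i : Fin n) :
    x⁻¹.d i = -(x.d i) * MonoidAlgebra.of ℤ _ x.g⁻¹ := rfl
@[simp] theorem Coc.inv_g (x : Coc n) : x⁻¹.g = x.g⁻¹ := rfl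

/-- The Fox derivative cocycle. -/
noncomputable def D : FreeGroup (Fin n) →* Coc n :=
  FreeGroup.lift fun i =>
    ⟨Pi.single i (-(MonoidAlgebra.of ℤ (FreeGroup (Fin n)) (FreeGroup.of i))),
     FreeGroup.of i⟩

theorem D_of (i : Fin n) :
    D n (FreeGroup.of i) =
      ⟨Pi.single i (-(MonoidAlgebra.of ℤ (FreeGroup (Fin n)) (FreeGroup.of i))),
       FreeGroup.of i⟩ := FreeGroup.lift_apply_of

def proj : Coc n →* FreeGroup (Fin n) where
  toFun := Coc.g
  map_one' := rfl
  map_mul' _ _ := rfl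

@[simp] theorem D_g (g : FreeGroup (Fin n)) : (D n g).g = g := by
  have : (proj n).comp (D n) = MonoidHom.id _ := by
    apply FreeGroup.ext_hom
    intro i
    show (D n (FreeGroup.of i)).g = FreeGroup.of i
    rw [D_of]
  exact DFunLike.congr_fun this g

/-- The key identity: `Σᵢ (γᵢ⁻¹ − 1) · Dᵢ(g) = g − 1`. -/
theorem key (g : FreeGroup (Fin n)) :
    ∑ i : Fin n,
        (MonoidAlgebra.of ℤ (FreeGroup (Fin n)) ((FreeGroup.of i)⁻¹) - 1) * (D n g).d i =
      MonoidAlgebra.of ℤ (FreeGroup (Fin n)) g - 1 := by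
  induction g using FreeGroup.induction_on with
  | C1 =>
      rw [map_one, map_one, sub_self]
      simp
  | of j =>
      show _ = MonoidAlgebra.of ℤ (FreeGroup (Fin n)) (FreeGroup.of j) - 1
      rw [D_of]
      simp only
      rw [Finset.sum_eq_single j]
      · rw [Pi.single_eq_same, mul_neg, ← neg_sub, neg_mul, neg_neg, sub_mul, one_mul,
          ← map_mul, inv_mul_cancel, map_one]
      · intro b _ hb
        rw [Pi.single_eq_of_ne hb, mul_zero]
      · simp
  | inv_of j _ =>
      show _ = MonoidAlgebra.of ℤ (FreeGroup (Fin n)) (FreeGroup.of j)⁻¹ - 1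
      rw [map_inv, D_of]
      simp only [Coc.inv_d, Coc.inv_g]
      rw [Finset.sum_eq_single j]
      · rw [Pi.single_eq_same, neg_neg, ← map_mul, mul_inv_cancel, map_one, mul_one]
      · intro b _ hb
        rw [Pi.single_eq_of_ne hb, neg_zero, zero_mul, mul_zero]
      · simp
  | mul g h hg hh =>
      rw [map_mul]
      simp only [Coc.mul_d, Coc.mul_g, D_g, mul_add, ← mul_assoc]
      rw [Finset.sum_add_distrib, ← Finset.sum_mul, hg, hh, map_mul, sub_mul, one_mul]
      abel

/-- The Fox derivative, extended `ℤ`-linearly to the group ring. -/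
noncomputable def Phi : R n →ₗ[ℤ] (Fin n → R n) :=
  Finsupp.lift (Fin n → R n) ℤ (FreeGroup (Fin n)) (fun g => (D n g).d) ∘ₗ
    (MonoidAlgebra.coeffLinearEquiv ℤ).toLinearMap

theorem Phi_single (g : FreeGroup (Fin n)) (c : ℤ) :
    Phi n (MonoidAlgebra.single g c) = c • (D n g).d := by
  show (Finsupp.lift (Fin n → R n) ℤ (FreeGroup (Fin n)) (fun g => (D n g).d))
      (Finsupp.single g c) = c • (D n g).d
  rw [Finsupp.lift_apply]
  exact Finsupp.sum_single_index (zero_smul ℤ _)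

theorem single_eq_smul_of (g : FreeGroup (Fin n)) (c : ℤ) :
    (MonoidAlgebra.single g c : R n) = c • MonoidAlgebra.of ℤ _ g := by
  rw [MonoidAlgebra.of_apply, MonoidAlgebra.smul_single', mul_one]

theorem A (x : R n) :
    ∑ i : Fin n,
        (MonoidAlgebra.of ℤ (FreeGroup (Fin n)) ((FreeGroup.of i)⁻¹) - 1) * Phi n x i =
      x - (Finsupp.sum x.coeff fun _ a => a) • 1 := by
  induction x using MonoidAlgebra.induction_linear with
  | zero =>
      rw [MonoidAlgebra.coeff_zero, Finsupp.sum_zero_index, map_zero, zero_smul, sub_zero]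
      simp
  | add f g hf hg =>
      rw [MonoidAlgebra.coeff_add, Finsupp.sum_add_index (fun _ _ => rfl) (fun _ _ _ _ => rfl), map_add]
      simp only [Pi.add_apply, mul_add, Finset.sum_add_distrib, hf, hg]
      module
  | single g c =>
      rw [Phi_single, MonoidAlgebra.coeff_single, Finsupp.sum_single_index rfl]
      simp only [Pi.smul_apply, mul_smul_comm, ← Finset.smul_sum, key]
      rw [single_eq_smul_of, smul_sub]

theorem D_inv_of (i : Fin n) : (D n ((FreeGroup.of i)⁻¹)).d = Pi.single i 1 := by
  funext j
  rw [map_inv, D_of, Coc.inv_d]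
  dsimp only
  rcases eq_or_ne j i with rfl | hji
  · rw [Pi.single_eq_same, Pi.single_eq_same, neg_neg, ← map_mul, mul_inv_cancel, map_one]
  · rw [Pi.single_eq_of_ne hji, Pi.single_eq_of_ne hji, neg_zero, zero_mul]

theorem B (i : Fin n) (a : R n) :
    Phi n ((MonoidAlgebra.of ℤ (FreeGroup (Fin n)) ((FreeGroup.of i)⁻¹) - 1) * a) =
      Pi.single i a := by
  induction a using MonoidAlgebra.induction_linear with
  | zero => rw [mul_zero, map_zero, Pi.single_zero]
  | add f g hf hg => rw [mul_add, map_add, hf, hg, ← Pi.single_add]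
  | single h c =>
      have hm : (MonoidAlgebra.of ℤ (FreeGroup (Fin n)) ((FreeGroup.of i)⁻¹) - 1) *
          MonoidAlgebra.single h c =
          MonoidAlgebra.single ((FreeGroup.of i)⁻¹ * h) c -
            MonoidAlgebra.single h c := by
        rw [sub_mul, one_mul, MonoidAlgebra.of_apply]
        congr 1
        exact (MonoidAlgebra.single_mul_single _ _ _ _).trans (by rw [one_mul])
      rw [hm, map_sub, Phi_single, Phi_single, ← smul_sub, map_mul]
      funext j
      simp only [Coc.mul_d, D_inv_of, D_g, Pi.smul_apply, Pi.sub_apply, Pi.add_apply]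
      rcases eq_or_ne j i with rfl | hji
      · rw [Pi.single_eq_same, Pi.single_eq_same, one_mul, add_sub_cancel_right]
        exact (single_eq_smul_of n h c).symm
      · rw [Pi.single_eq_of_ne hji, Pi.single_eq_of_ne hji, zero_mul, zero_add, sub_self,
          smul_zero]

/-- The augmentation, as a ring hom. -/
noncomputable def eps : R n →ₐ[ℤ] ℤ :=
  MonoidAlgebra.lift ℤ ℤ (FreeGroup (Fin n)) 1

theorem eps_apply (x : R n) : eps n x = Finsupp.sum x.coeff fun _ a => a := by
  rw [eps, MonoidAlgebra.lift_apply]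
  exact Finsupp.sum_congr fun g _ => by simp

@[simp] theorem eps_of (g : FreeGroup (Fin n)) :
    eps n (MonoidAlgebra.of ℤ (FreeGroup (Fin n)) g) = 1 := by
  rw [eps, MonoidAlgebra.lift_of]; rfl

theorem Phi_sum (a : Fin n → R n) :
    Phi n (∑ i : Fin n,
        (MonoidAlgebra.of ℤ (FreeGroup (Fin n)) ((FreeGroup.of i)⁻¹) - 1) * a i) = a := by
  rw [map_sum]
  simp only [B]
  exact Finset.univ_sum_single a

end AugFree

/-- The augmentation ideal `I(Fₙ) = Ker(𝔱 : ℤ[Fₙ] → ℤ)` is a free right `ℤ[Fₙ]`-module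
with basis `{γ₁⁻¹ − 1, …, γₙ⁻¹ − 1}`: the map `(a₁,…,aₙ) ↦ Σᵢ (γᵢ⁻¹ − 1)aᵢ` is
injective with range exactly the augmentation ideal. -/
theorem augmentation_ideal_free_basis (n : ℕ) :
    Function.Injective
      (fun a : Fin n → MonoidAlgebra ℤ (FreeGroup (Fin n)) =>
        ∑ i : Fin n,
          (MonoidAlgebra.of ℤ (FreeGroup (Fin n)) ((FreeGroup.of i)⁻¹) - 1) * a i) ∧
    Set.range
      (fun a : Fin n → MonoidAlgebra ℤ (FreeGroup (Fin n)) =>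
        ∑ i : Fin n,
          (MonoidAlgebra.of ℤ (FreeGroup (Fin n)) ((FreeGroup.of i)⁻¹) - 1) * a i) =
      {x : MonoidAlgebra ℤ (FreeGroup (Fin n)) | (Finsupp.sum x.coeff fun _ a => a) = 0} := by
  constructor
  · intro a b hab
    have := congrArg (AugFree.Phi n) hab
    dsimp only at this
    rwa [AugFree.Phi_sum, AugFree.Phi_sum] at this
  · ext x
    constructor
    · rintro ⟨a, rfl⟩
      dsimp only
      show (Finsupp.sum (MonoidAlgebra.coeff _) fun _ a => a) = 0
      rw [← AugFree.eps_apply, map_sum]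
      refine Finset.sum_eq_zero fun i _ => ?_
      rw [map_mul, map_sub, map_one, AugFree.eps_of, sub_self, zero_mul]
    · intro hx
      refine ⟨AugFree.Phi n x, ?_⟩
      dsimp only
      show _ = x
      rw [AugFree.A, hx, zero_smul, sub_zero]
end

section
/- The Magnus representation r : Aut Fₙ → M(n, ℤ[Fₙ]), sending φ to the matrix whose (i,j)-entry is the image under the bar-involution of ∂(φ(γⱼ))/∂γᵢ, satisfies the crossed homomorphism identity r(φψ) = r(φ) · ᶠr(ψ), where ᶠr(ψ) is the matrix obtained by applying φ entrywise. In particular r(φ) ∈ GL(n, ℤ[Fₙ]) for every automorphism φ. -/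
noncomputable def barInv (n : ℕ) (x : MonoidAlgebra ℤ (FreeGroup (Fin n))) :
    MonoidAlgebra ℤ (FreeGroup (Fin n)) :=
  MonoidAlgebra.mapDomain (fun g => g⁻¹) x

namespace MagnusAux

variable {n : ℕ}

lemma barInv_zero : barInv n 0 = 0 := MonoidAlgebra.mapDomain_zero _

lemma barInv_add (a b : MonoidAlgebra ℤ (FreeGroup (Fin n))) :
    barInv n (a + b) = barInv n a + barInv n b := MonoidAlgebra.mapDomain_add _ a b

lemma barInv_single (g : FreeGroup (Fin n)) (r : ℤ) :
    barInv n (MonoidAlgebra.single g r) = MonoidAlgebra.single g⁻¹ r :=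
  MonoidAlgebra.mapDomain_single

lemma barInv_one : barInv n 1 = 1 := by
  rw [MonoidAlgebra.one_def, barInv_single, inv_one]

lemma barInv_sum {ι : Type*} (s : Finset ι) (f : ι → MonoidAlgebra ℤ (FreeGroup (Fin n))) :
    barInv n (∑ k ∈ s, f k) = ∑ k ∈ s, barInv n (f k) := by
  classical
  induction s using Finset.induction with
  | empty => simp [barInv_zero]
  | insert _ _ h ih => rw [Finset.sum_insert h, Finset.sum_insert h, barInv_add, ih]

lemma barInv_mul (a b : MonoidAlgebra ℤ (FreeGroup (Fin n))) :
    barInv n (a * b) = barInv n b * barInv n a := by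
  induction a using MonoidAlgebra.induction_linear with
  | zero => simp [barInv_zero]
  | add x y hx hy => rw [add_mul, barInv_add, barInv_add, mul_add, hx, hy]
  | single g c =>
    induction b using MonoidAlgebra.induction_linear with
    | zero => simp [barInv_zero]
    | add x y hx hy => rw [mul_add, barInv_add, barInv_add, add_mul, hx, hy]
    | single h c' =>
      rw [MonoidAlgebra.single_mul_single, barInv_single, barInv_single, barInv_single,
        MonoidAlgebra.single_mul_single, mul_inv_rev, mul_comm c c']

lemma barInv_mapDomain (f : FreeGroup (Fin n) →* FreeGroup (Fin n))
    (x : MonoidAlgebra ℤ (FreeGroup (Fin n))) :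
    barInv n (MonoidAlgebra.mapDomain ⇑f x) = MonoidAlgebra.mapDomain ⇑f (barInv n x) := by
  induction x using MonoidAlgebra.induction_linear with
  | zero => simp [barInv_zero]
  | add x y hx hy =>
    rw [MonoidAlgebra.mapDomain_add, barInv_add, barInv_add, MonoidAlgebra.mapDomain_add, hx, hy]
  | single g c =>
    rw [MonoidAlgebra.mapDomain_single, barInv_single, barInv_single,
      MonoidAlgebra.mapDomain_single, map_inv]

end MagnusAux
open MagnusAux

/-- The Magnus representation `r : Aut Fₙ → M(n, ℤ[Fₙ])`,
`r(φ)ᵢⱼ = bar(∂(φ(γⱼ))/∂γᵢ)`, satisfies the crossed homomorphism identity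
`r(φψ) = r(φ)·ᵠr(ψ)`; in particular `r(φ)` is invertible for every automorphism. -/
theorem magnus_aut_crossed_hom (n : ℕ)
    (d : Fin n → FreeGroup (Fin n) → MonoidAlgebra ℤ (FreeGroup (Fin n)))
    (hcross : ∀ (j : Fin n) (x y : FreeGroup (Fin n)),
      d j (x * y) = d j x + MonoidAlgebra.of ℤ (FreeGroup (Fin n)) x * d j y)
    (hbasis : ∀ j i : Fin n, d j (FreeGroup.of i) = if i = j then 1 else 0)
    (r : MulAut (FreeGroup (Fin n)) →
      Matrix (Fin n) (Fin n) (MonoidAlgebra ℤ (FreeGroup (Fin n))))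
    (hr : ∀ (φ : MulAut (FreeGroup (Fin n))) (i j : Fin n),
      r φ i j = barInv n (d i (φ (FreeGroup.of j)))) :
    (∀ φ ψ : MulAut (FreeGroup (Fin n)),
      r (φ * ψ) = r φ * (r ψ).map (MonoidAlgebra.mapDomainRingHom ℤ φ.toMonoidHom)) ∧
    (∀ φ : MulAut (FreeGroup (Fin n)), IsUnit (r φ)) := by
  classical
  -- d of 1 is 0
  have hd1 : ∀ j, d j 1 = 0 := by
    intro j
    have h1 := hcross j 1 1
    rw [one_mul, map_one, one_mul] at h1
    exact (left_eq_add.mp h1)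
  -- d of inverse
  have hdinv : ∀ (j : Fin n) (x : (FreeGroup (Fin n))),
      d j x⁻¹ = -(MonoidAlgebra.of ℤ (FreeGroup (Fin n)) x⁻¹ * d j x) := by
    intro j x
    have h := hcross j x x⁻¹
    rw [mul_inv_cancel, hd1] at h
    have h2 : MonoidAlgebra.of ℤ (FreeGroup (Fin n)) x * d j x⁻¹ = -d j x := by
      have h' := h.symm
      rw [add_comm] at h'
      exact eq_neg_of_add_eq_zero_left h'
    calc d j x⁻¹
        = (MonoidAlgebra.of ℤ (FreeGroup (Fin n)) x⁻¹ * MonoidAlgebra.of ℤ (FreeGroup (Fin n)) x) * d j x⁻¹ := by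
          rw [← map_mul, inv_mul_cancel, map_one, one_mul]
      _ = MonoidAlgebra.of ℤ (FreeGroup (Fin n)) x⁻¹ * (MonoidAlgebra.of ℤ (FreeGroup (Fin n)) x * d j x⁻¹) := mul_assoc _ _ _
      _ = MonoidAlgebra.of ℤ (FreeGroup (Fin n)) x⁻¹ * (-d j x) := by rw [h2]
      _ = -(MonoidAlgebra.of ℤ (FreeGroup (Fin n)) x⁻¹ * d j x) := mul_neg _ _
  -- mapDomainRingHom facts
  have hMof : ∀ (φ : MulAut (FreeGroup (Fin n))) (g : (FreeGroup (Fin n))),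
      (MonoidAlgebra.mapDomainRingHom ℤ φ.toMonoidHom) (MonoidAlgebra.of ℤ (FreeGroup (Fin n)) g)
        = MonoidAlgebra.of ℤ (FreeGroup (Fin n)) (φ g) := by
    intro φ g
    simp [MonoidAlgebra.mapDomainRingHom_apply, MonoidAlgebra.of_apply,
      Finsupp.mapDomain_single]
  -- the chain rule
  have hchain : ∀ (φ : MulAut (FreeGroup (Fin n))) (i : Fin n) (w : (FreeGroup (Fin n))),
      d i (φ w) = ∑ k, (MonoidAlgebra.mapDomainRingHom ℤ φ.toMonoidHom) (d k w)
          * d i (φ (FreeGroup.of k)) := by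
    intro φ i w
    induction w with
    | C1 => simp [hd1, map_one φ]
    | of x =>
      show d i (φ (FreeGroup.of x)) = ∑ k,
        (MonoidAlgebra.mapDomainRingHom ℤ φ.toMonoidHom) (d k (FreeGroup.of x))
          * d i (φ (FreeGroup.of k))
      have : ∀ k : Fin n,
          (MonoidAlgebra.mapDomainRingHom ℤ φ.toMonoidHom) (d k (FreeGroup.of x))
            = if x = k then 1 else 0 := by
        intro k
        rw [hbasis]
        split <;> simp
      simp only [this, ite_mul, one_mul, zero_mul]
      simp
    | inv_of x ih =>
      show d i (φ (FreeGroup.of x)⁻¹) = ∑ k,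
        (MonoidAlgebra.mapDomainRingHom ℤ φ.toMonoidHom) (d k (FreeGroup.of x)⁻¹)
          * d i (φ (FreeGroup.of k))
      have ih' : d i (φ (FreeGroup.of x)) = ∑ k,
        (MonoidAlgebra.mapDomainRingHom ℤ φ.toMonoidHom) (d k (FreeGroup.of x))
          * d i (φ (FreeGroup.of k)) := ih
      have hφ : φ ((FreeGroup.of x)⁻¹) = (φ (FreeGroup.of x))⁻¹ := map_inv φ _
      rw [hφ, hdinv]
      have : ∀ k : Fin n,
          (MonoidAlgebra.mapDomainRingHom ℤ φ.toMonoidHom) (d k ((FreeGroup.of x)⁻¹))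
            = -(MonoidAlgebra.of ℤ (FreeGroup (Fin n)) (φ (FreeGroup.of x))⁻¹
                * (MonoidAlgebra.mapDomainRingHom ℤ φ.toMonoidHom) (d k (FreeGroup.of x))) := by
        intro k
        rw [hdinv, map_neg, map_mul, hMof, map_inv]
      rw [ih', Finset.mul_sum, ← Finset.sum_neg_distrib]
      exact Finset.sum_congr rfl fun k _ => by rw [this, neg_mul, mul_assoc]
    | mul x y hx hy =>
      rw [map_mul φ, hcross, hx, hy]
      have : ∀ k : Fin n,
          (MonoidAlgebra.mapDomainRingHom ℤ φ.toMonoidHom) (d k (x * y))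
            = (MonoidAlgebra.mapDomainRingHom ℤ φ.toMonoidHom) (d k x)
              + MonoidAlgebra.of ℤ (FreeGroup (Fin n)) (φ x)
                * (MonoidAlgebra.mapDomainRingHom ℤ φ.toMonoidHom) (d k y) := by
        intro k
        rw [hcross, map_add, map_mul, hMof]
      simp only [this, add_mul, Finset.sum_add_distrib, mul_assoc, ← Finset.mul_sum]
  -- barInv commutes with mapDomainRingHom
  have hbarM : ∀ (φ : MulAut (FreeGroup (Fin n))) (x : MonoidAlgebra ℤ (FreeGroup (Fin n))),
      barInv n ((MonoidAlgebra.mapDomainRingHom ℤ φ.toMonoidHom) x)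
        = (MonoidAlgebra.mapDomainRingHom ℤ φ.toMonoidHom) (barInv n x) := by
    intro φ x
    simp only [MonoidAlgebra.mapDomainRingHom_apply]
    exact barInv_mapDomain φ.toMonoidHom x
  -- the crossed homomorphism identity
  have hcrossed : ∀ φ ψ : MulAut (FreeGroup (Fin n)),
      r (φ * ψ) = r φ * (r ψ).map (MonoidAlgebra.mapDomainRingHom ℤ φ.toMonoidHom) := by
    intro φ ψ
    refine Matrix.ext fun i j => ?_
    rw [hr, Matrix.mul_apply]
    have : (φ * ψ) (FreeGroup.of j) = φ (ψ (FreeGroup.of j)) := rfl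
    rw [this, hchain φ i (ψ (FreeGroup.of j)), barInv_sum]
    refine Finset.sum_congr rfl fun k _ => ?_
    rw [barInv_mul, hbarM, Matrix.map_apply, hr, hr]
  -- r 1 = 1
  have hone : r 1 = 1 := by
    refine Matrix.ext fun i j => ?_
    rw [hr]
    have : (1 : MulAut (FreeGroup (Fin n))) (FreeGroup.of j) = FreeGroup.of j := rfl
    rw [this, hbasis, Matrix.one_apply]
    by_cases h : i = j
    · subst h; simp [barInv_one]
    · rw [if_neg (fun hh => h hh.symm), if_neg h, barInv_zero]
  -- inverse composition of the ring homs
  have hMM : ∀ (φ : MulAut (FreeGroup (Fin n))) (x : MonoidAlgebra ℤ (FreeGroup (Fin n))),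
      (MonoidAlgebra.mapDomainRingHom ℤ φ.toMonoidHom)
        ((MonoidAlgebra.mapDomainRingHom ℤ (φ⁻¹).toMonoidHom) x) = x := by
    intro φ x
    have h : ∀ (f : MulAut (FreeGroup (Fin n))) (y : MonoidAlgebra ℤ (FreeGroup (Fin n))),
        (MonoidAlgebra.mapDomainRingHom ℤ f.toMonoidHom) y = MonoidAlgebra.mapDomain ⇑f y := by
      intro f y; rfl
    rw [h, h]
    induction x using MonoidAlgebra.induction_linear with
    | zero => simp
    | add x y hx hy =>
      rw [MonoidAlgebra.mapDomain_add, MonoidAlgebra.mapDomain_add, hx, hy]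
    | single g c =>
      rw [MonoidAlgebra.mapDomain_single, MonoidAlgebra.mapDomain_single]
      simp [MulAut.inv_def]
  refine ⟨hcrossed, fun φ => ?_⟩
  have hAB : r φ * (r φ⁻¹).map (MonoidAlgebra.mapDomainRingHom ℤ φ.toMonoidHom) = 1 := by
    rw [← hcrossed, mul_inv_cancel, hone]
  have hBA' : r φ⁻¹ * (r φ).map (MonoidAlgebra.mapDomainRingHom ℤ (φ⁻¹).toMonoidHom) = 1 := by
    rw [← hcrossed, inv_mul_cancel, hone]
  have hBA : (r φ⁻¹).map (MonoidAlgebra.mapDomainRingHom ℤ φ.toMonoidHom) * r φ = 1 := by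
    have := congrArg (Matrix.map · (MonoidAlgebra.mapDomainRingHom ℤ φ.toMonoidHom)) hBA'
    simp only [Matrix.map_mul] at this
    rw [Matrix.map_map] at this
    have heq : (r φ).map (⇑(MonoidAlgebra.mapDomainRingHom ℤ φ.toMonoidHom)
        ∘ ⇑(MonoidAlgebra.mapDomainRingHom ℤ (φ⁻¹).toMonoidHom)) = r φ := by
      refine Matrix.ext fun i j => ?_
      simp only [Matrix.map_apply, Function.comp_apply, hMM]
    rw [heq] at this
    rwa [Matrix.map_one _ (map_zero _) (map_one _)] at this
  exact ⟨⟨r φ, (r φ⁻¹).map (MonoidAlgebra.mapDomainRingHom ℤ φ.toMonoidHom), hAB, hBA⟩, rfl⟩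
end
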